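/- If there exists a negligible fcc-compatible function a : Λ → ℝ for a saturated packing Λ (of unit balls in ℝ³), then there exists a constant C such that for all r ≥ 1 and all x, the finite density δ(x,r,Λ) is at most π/√18 + C/r. -/

import Mathlib

open MeasureTheory Metric

noncomputable section

/-- The Voronoi cell of `v` in `Λ`: points at least as close to `v` as to any point of `Λ`. -/
def VoronoiCell (Λ : Set (EuclideanSpace ℝ (Fin 3))) (v : EuclideanSpace ℝ (Fin 3)) :
    Set (EuclideanSpace ℝ (Fin 3)) :=
  {x | ∀ w ∈ Λ, dist x v ≤ dist x w}

/-- The finite density `δ(x,r,Λ)`: volume of the part of the union of unit balls of the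
packing inside `B(x,r)`, divided by the volume of `B(x,r)`. -/
def finDensity (Λ : Set (EuclideanSpace ℝ (Fin 3))) (x : EuclideanSpace ℝ (Fin 3)) (r : ℝ) : ℝ :=
  (volume ((⋃ v ∈ Λ, closedBall v 1) ∩ closedBall x r)).toReal /
    (volume (closedBall x r)).toReal

local notation "E3" => EuclideanSpace ℝ (Fin 3)


lemma isClosed_voronoi (Λ : Set E3) (v : E3) : IsClosed (VoronoiCell Λ v) := by
  have : VoronoiCell Λ v = ⋂ w ∈ Λ, {x : E3 | dist x v ≤ dist x w} := by
    ext x; simp [VoronoiCell]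
  rw [this]
  exact isClosed_biInter fun w _ =>
    isClosed_le (continuous_id.dist continuous_const) (continuous_id.dist continuous_const)

lemma voronoi_inter_null (Λ : Set E3) {u v : E3} (hu : u ∈ Λ) (hv : v ∈ Λ) (huv : u ≠ v) :
    volume (VoronoiCell Λ u ∩ VoronoiCell Λ v) = 0 := by
  have hsub : VoronoiCell Λ u ∩ VoronoiCell Λ v ⊆ (AffineSubspace.perpBisector u v : Set E3) := by
    rintro x ⟨hxu, hxv⟩
    rw [SetLike.mem_coe, AffineSubspace.mem_perpBisector_iff_dist_eq]
    exact le_antisymm (hxu v hv) (hxv u hu)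
  refine measure_mono_null hsub (Measure.addHaar_affineSubspace _ _ ?_)
  intro htop
  have : u ∈ AffineSubspace.perpBisector u v := htop ▸ AffineSubspace.mem_top ℝ E3 u
  rw [AffineSubspace.mem_perpBisector_iff_dist_eq, dist_self] at this
  exact huv (dist_eq_zero.mp this.symm)

lemma voronoi_subset (Λ : Set E3)
    (saturated : ∀ x : E3, ∃ v ∈ Λ, dist x v < 2) (v : E3) :
    VoronoiCell Λ v ⊆ closedBall v 2 := by
  intro x hx
  obtain ⟨w, hw, hd⟩ := saturated x
  rw [mem_closedBall]
  exact (hx w hw).trans hd.le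

lemma finite_inter_closedBall (Λ : Set E3)
    (packing : ∀ u ∈ Λ, ∀ v ∈ Λ, u ≠ v → 2 ≤ dist u v) (x : E3) (R : ℝ) :
    (Λ ∩ closedBall x R).Finite := by
  by_contra h
  have hinf : (Λ ∩ closedBall x R).Infinite := h
  set v0 := volume (ball (0:E3) 1) with hv0
  have hv0pos : 0 < v0 := measure_ball_pos _ _ one_pos
  have hv0top : v0 ≠ ⊤ := measure_ball_lt_top.ne
  have hMtop : volume (ball x (R+1)) ≠ ⊤ := measure_ball_lt_top.ne
  obtain ⟨n, hn⟩ := ENNReal.exists_nat_gt (ENNReal.div_lt_top hMtop hv0pos.ne').ne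
  have hM : volume (ball x (R+1)) < n * v0 := by
    rwa [ENNReal.div_lt_iff (Or.inl hv0pos.ne') (Or.inl hv0top)] at hn
  obtain ⟨t, hts, htfin, htcard⟩ := hinf.exists_subset_ncard_eq n
  set F := htfin.toFinset with hF
  have hFsub : ∀ v ∈ F, v ∈ Λ ∩ closedBall x R := fun v hvF => hts (htfin.mem_toFinset.mp hvF)
  have hdisj : (F : Set E3).PairwiseDisjoint (fun v => ball v 1) := by
    intro p hp q hq hpq
    have hp' := hFsub p (by simpa using hp)
    have hq' := hFsub q (by simpa using hq)
    refine Set.disjoint_left.mpr fun y hyp hyq => ?_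
    have : dist p q < 2 := by
      calc dist p q ≤ dist p y + dist y q := dist_triangle _ _ _
        _ < 1 + 1 := by
            rw [mem_ball] at hyp hyq
            rw [dist_comm p y]; linarith
        _ = 2 := by norm_num
    exact absurd this (not_lt.mpr (packing p hp'.1 q hq'.1 hpq))
  have hunion : volume (⋃ v ∈ F, ball v 1) = n * v0 := by
    rw [measure_biUnion_finset hdisj (fun v _ => measurableSet_ball)]
    have : ∀ v ∈ F, volume (ball v 1) = v0 := fun v _ => Measure.addHaar_ball_center _ _ _
    rw [Finset.sum_congr rfl this, Finset.sum_const, nsmul_eq_mul, ← htcard,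
      Set.ncard_eq_toFinset_card _ htfin]
  have hsub : (⋃ v ∈ F, ball v 1) ⊆ ball x (R+1) := by
    intro y hy
    simp only [Set.mem_iUnion] at hy
    obtain ⟨v, hvF, hyv⟩ := hy
    have hv' := hFsub v hvF
    rw [mem_ball] at hyv ⊢
    calc dist y x ≤ dist y v + dist v x := dist_triangle _ _ _
      _ < 1 + R := by
          have := hv'.2; rw [mem_closedBall] at this; linarith
      _ = R + 1 := by ring
  have : volume (⋃ v ∈ F, ball v 1) ≤ volume (ball x (R+1)) := measure_mono hsub
  rw [hunion] at this
  exact absurd this (not_le.mpr hM)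


lemma unitBall_vol : (volume (closedBall (0:E3) 1)).toReal = 4 * Real.pi / 3 := by
  rw [EuclideanSpace.volume_closedBall]
  have hcard : Fintype.card (Fin 3) = 3 := by simp
  rw [hcard]
  have hG : Real.Gamma ((3:ℕ) / 2 + 1) = 3 / 4 * Real.sqrt Real.pi := by
    have h1 : ((3:ℕ) / 2 + 1 : ℝ) = (3:ℝ)/2 + 1 := by norm_num
    rw [h1, Real.Gamma_add_one (by norm_num)]
    have h2 : (3:ℝ)/2 = 1/2 + 1 := by norm_num
    rw [h2, Real.Gamma_add_one (by norm_num), Real.Gamma_one_half_eq]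
    ring
  rw [hG]
  have hs : Real.sqrt Real.pi ^ 3 = Real.pi * Real.sqrt Real.pi := by
    rw [pow_succ, Real.sq_sqrt Real.pi_pos.le]
  rw [hs]
  have hspos : (0:ℝ) < Real.sqrt Real.pi := Real.sqrt_pos.mpr Real.pi_pos
  have : Real.pi * Real.sqrt Real.pi / (3 / 4 * Real.sqrt Real.pi) = 4 * Real.pi / 3 := by
    field_simp
  rw [this, ENNReal.ofReal_one, one_pow, one_mul, ENNReal.toReal_ofReal (by positivity)]

theorem density_bound_of_negligible_fcc_compatible
    (Λ : Set (EuclideanSpace ℝ (Fin 3)))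
    (packing : ∀ u ∈ Λ, ∀ v ∈ Λ, u ≠ v → 2 ≤ dist u v)
    (saturated : ∀ x : EuclideanSpace ℝ (Fin 3), ∃ v ∈ Λ, dist x v < 2)
    (a : EuclideanSpace ℝ (Fin 3) → ℝ)
    (negligible : ∃ C₁ : ℝ, ∀ x : EuclideanSpace ℝ (Fin 3), ∀ r : ℝ, 1 ≤ r →
      ∑' v : (Λ ∩ closedBall x r : Set (EuclideanSpace ℝ (Fin 3))), a v ≤ C₁ * r ^ 2)
    (fcc_compatible : ∀ v ∈ Λ,
      Real.sqrt 32 ≤ (volume (VoronoiCell Λ v)).toReal + a v) :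
    ∃ C : ℝ, ∀ r : ℝ, 1 ≤ r → ∀ x : EuclideanSpace ℝ (Fin 3),
      finDensity Λ x r ≤ Real.pi / Real.sqrt 18 + C / r := by
  obtain ⟨C₁, hC₁⟩ := negligible
  set s32 := Real.sqrt 32 with hs32def
  set b : ℝ := (volume (closedBall (0:E3) 1)).toReal with hbdef
  have hb : b = 4 * Real.pi / 3 := unitBall_vol
  have hbpos : 0 < b := by rw [hb]; positivity
  have hbfin : volume (closedBall (0:E3) 1) ≠ ⊤ := measure_closedBall_lt_top.ne
  have hs32 : s32 = 4 * Real.sqrt 2 := by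
    rw [hs32def, show (32:ℝ) = 4^2*2 by norm_num, Real.sqrt_mul (by positivity),
      Real.sqrt_sq (by norm_num)]
  have h18 : Real.sqrt 18 = 3 * Real.sqrt 2 := by
    rw [show (18:ℝ) = 3^2*2 by norm_num, Real.sqrt_mul (by positivity),
      Real.sqrt_sq (by norm_num)]
  have hs2pos : (0:ℝ) < Real.sqrt 2 := Real.sqrt_pos.mpr (by norm_num)
  have hs32pos : 0 < s32 := by rw [hs32]; positivity
  have key : b / s32 = Real.pi / Real.sqrt 18 := by
    rw [hb, hs32, h18]; field_simp
  have hcb : ∀ (y : E3) (ρ : ℝ), 0 ≤ ρ → (volume (closedBall y ρ)).toReal = ρ^3 * b := by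
    intro y ρ hρ
    rw [hbdef, Measure.addHaar_closedBall' volume y hρ, ENNReal.toReal_mul,
      ENNReal.toReal_ofReal (by positivity)]
    simp [finrank_euclideanSpace_fin]
  refine ⟨63 * (Real.pi / Real.sqrt 18) + 4 * |C₁| / s32, ?_⟩
  intro r hr x
  have hr0 : (0:ℝ) < r := lt_of_lt_of_le one_pos hr
  have hfin := finite_inter_closedBall Λ packing x (r+1)
  set F := hfin.toFinset with hFdef
  have hFmem : ∀ v ∈ F, v ∈ Λ ∧ dist v x ≤ r + 1 := by
    intro v hv
    have := hfin.mem_toFinset.mp hv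
    exact ⟨this.1, by simpa [mem_closedBall] using this.2⟩
  set N := F.card with hNdef
  -- Step A : numerator bound
  have hsubA : (⋃ v ∈ Λ, closedBall v 1) ∩ closedBall x r ⊆ ⋃ v ∈ F, closedBall v 1 := by
    rintro y ⟨hy1, hy2⟩
    simp only [Set.mem_iUnion] at hy1 ⊢
    obtain ⟨v, hvΛ, hyv⟩ := hy1
    refine ⟨v, ?_, hyv⟩
    rw [hfin.mem_toFinset]
    refine ⟨hvΛ, ?_⟩
    rw [mem_closedBall]
    rw [mem_closedBall] at hyv hy2
    calc dist v x ≤ dist v y + dist y x := dist_triangle _ _ _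
      _ ≤ 1 + r := by rw [dist_comm] at hyv; linarith
      _ = r + 1 := by ring
  have hA : volume ((⋃ v ∈ Λ, closedBall v 1) ∩ closedBall x r) ≤
      (N : ENNReal) * volume (closedBall (0:E3) 1) := by
    refine (measure_mono hsubA).trans ((measure_biUnion_finset_le F _).trans ?_)
    have : ∀ v ∈ F, volume (closedBall v 1) = volume (closedBall (0:E3) 1) :=
      fun v _ => Measure.addHaar_closedBall_center _ _ _
    rw [Finset.sum_congr rfl this, Finset.sum_const, nsmul_eq_mul]
  have hnum : (volume ((⋃ v ∈ Λ, closedBall v 1) ∩ closedBall x r)).toReal ≤ N * b := by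
    have := ENNReal.toReal_mono (by finiteness) hA
    rwa [ENNReal.toReal_mul, ENNReal.toReal_natCast] at this
  have hden : (volume (closedBall x r)).toReal = r^3 * b := hcb x r hr0.le
  have hdenpos : 0 < r^3 * b := by positivity
  have hstep1 : finDensity Λ x r ≤ (N : ℝ) / r^3 := by
    rw [finDensity, hden]
    calc (volume ((⋃ v ∈ Λ, closedBall v 1) ∩ closedBall x r)).toReal / (r^3*b)
        ≤ (N * b) / (r^3 * b) := (div_le_div_iff_of_pos_right hdenpos).mpr hnum
      _ = (N : ℝ) / r^3 := by
          rw [mul_comm ((N:ℝ)) b, mul_comm (r^3) b, mul_div_mul_left _ _ hbpos.ne']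
  -- Step B : Voronoi volume bound
  have hBsum : ∑ v ∈ F, volume (VoronoiCell Λ v) ≤ volume (closedBall x (r+3)) := by
    rw [← measure_biUnion_finset₀ ?_ ?_]
    · apply measure_mono
      intro y hy
      simp only [Set.mem_iUnion] at hy
      obtain ⟨v, hvF, hyv⟩ := hy
      have hv := hFmem v hvF
      have h2 := voronoi_subset Λ saturated v hyv
      rw [mem_closedBall] at h2 ⊢
      calc dist y x ≤ dist y v + dist v x := dist_triangle _ _ _
        _ ≤ 2 + (r+1) := add_le_add h2 hv.2
        _ = r + 3 := by ring
    · intro p hp q hq hpq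
      exact voronoi_inter_null Λ (hFmem p (by simpa using hp)).1 (hFmem q (by simpa using hq)).1 hpq
    · exact fun v _ => (isClosed_voronoi Λ v).measurableSet.nullMeasurableSet
  have hcellfin : ∀ v ∈ F, volume (VoronoiCell Λ v) ≠ ⊤ := by
    intro v hv
    exact ((measure_mono (voronoi_subset Λ saturated v)).trans_lt measure_closedBall_lt_top).ne
  have hB' : ∑ v ∈ F, (volume (VoronoiCell Λ v)).toReal ≤ (r+3)^3 * b := by
    rw [← ENNReal.toReal_sum hcellfin, ← hcb x (r+3) (by linarith)]
    exact ENNReal.toReal_mono measure_closedBall_lt_top.ne hBsum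
  -- negligible sum
  have hsum_a : ∑ v ∈ F, a v ≤ C₁ * (r+1)^2 := by
    have h := hC₁ x (r+1) (by linarith)
    have heq : ∑' v : (Λ ∩ closedBall x (r+1) : Set E3), a v = ∑ v ∈ F, a v := by
      haveI := hfin.fintype
      rw [tsum_fintype, ← Finset.sum_subtype F (fun y => hfin.mem_toFinset) a]
    rwa [heq] at h
  -- fcc
  have hfcc : (N : ℝ) * s32 ≤ ∑ v ∈ F, ((volume (VoronoiCell Λ v)).toReal + a v) := by
    have := Finset.card_nsmul_le_sum F (fun v => (volume (VoronoiCell Λ v)).toReal + a v) s32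
      (fun v hv => fcc_compatible v (hFmem v hv).1)
    rwa [nsmul_eq_mul] at this
  have hNbound : (N : ℝ) * s32 ≤ (r+3)^3 * b + C₁ * (r+1)^2 := by
    rw [Finset.sum_add_distrib] at hfcc
    linarith
  -- final arithmetic
  have h1 : (r+3)^3 ≤ r^3 + 63*r^2 := by nlinarith [sq_nonneg r, sq_nonneg (r-1)]
  have h2 : C₁*(r+1)^2 ≤ 4 * |C₁| * r^2 := by
    have hc : C₁ ≤ |C₁| := le_abs_self C₁
    have habs : 0 ≤ |C₁| := abs_nonneg C₁
    nlinarith [sq_nonneg (r-1), sq_nonneg (r+1)]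
  have hN2 : (N : ℝ) * s32 ≤ (r^3 + 63*r^2) * b + 4 * |C₁| * r^2 := by nlinarith
  have hstep2 : (N : ℝ) / r^3 ≤ Real.pi / Real.sqrt 18 +
      (63 * (Real.pi / Real.sqrt 18) + 4 * |C₁| / s32) / r := by
    rw [← key]
    have hgoal : (N:ℝ)/r^3 ≤ (b*r^3 + 63*b*r^2 + 4 * |C₁| * r^2)/(s32*r^3) := by
      rw [div_le_div_iff₀ (by positivity) (by positivity)]
      calc (N:ℝ) * (s32 * r^3) = ((N:ℝ)*s32) * r^3 := by ring
        _ ≤ ((r^3+63*r^2)*b + 4 * |C₁| * r^2) * r^3 :=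
            mul_le_mul_of_nonneg_right hN2 (by positivity)
        _ = (b*r^3 + 63*b*r^2 + 4 * |C₁| * r^2) * r^3 := by ring
    refine hgoal.trans (le_of_eq ?_)
    field_simp
    ring
  exact hstep1.trans hstep2

end
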